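/- Let a ≥ 1, ν ≥ 1, h(z) = 1 + a z(1−z). Define Ψ̄(z) = (ν(1−z)h(z) − 1)/(ν h(z) − 1) for z ∈ [0,1]. Then Ψ̄′(z) ≤ −ν(ν−1)/(ν(1 + a/4) − 1)² for all z ∈ [0,1]; in particular if ν > 1, Ψ̄ is strictly decreasing on [0,1]. -/

import Mathlib

open Real Set Filter Topology

lemma key_deriv (a ν : ℝ) (ha : 1 ≤ a) (hν : 1 ≤ ν) (Ψ : ℝ → ℝ)
    (hΨ : Ψ = fun z => (ν * (1 - z) * (1 + a * z * (1 - z)) - 1) /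
      (ν * (1 + a * z * (1 - z)) - 1))
    (z : ℝ) (hz0 : 0 ≤ z) (hz1 : z ≤ 1)
    (hQ : 0 < ν * (1 + a * z * (1 - z)) - 1) :
    deriv Ψ z ≤ -(ν * (ν - 1)) / (ν * (1 + a / 4) - 1) ^ 2 := by
  have ha0 : (0:ℝ) < a := by linarith
  have h2 : HasDerivAt (fun z : ℝ => 1 - z) (-1) z := by
    exact (hasDerivAt_id' z).const_sub (1:ℝ)
  have h1 : HasDerivAt (fun z : ℝ => a * z) a z := by
    simpa using (hasDerivAt_id z).const_mul a
  have hb : HasDerivAt (fun z : ℝ => 1 + a * z * (1 - z))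
      (a * (1 - z) + a * z * (-1)) z := by
    simpa using ((h1.mul h2).const_add 1)
  have hQd : HasDerivAt (fun z : ℝ => ν * (1 + a * z * (1 - z)) - 1)
      (ν * (a * (1 - z) + a * z * (-1))) z := (hb.const_mul ν).sub_const 1
  have hl : HasDerivAt (fun z : ℝ => ν * (1 - z)) (ν * (-1)) z := by
    simpa using h2.const_mul ν
  have hPd : HasDerivAt (fun z : ℝ => ν * (1 - z) * (1 + a * z * (1 - z)) - 1)
      (ν * (-1) * (1 + a * z * (1 - z)) + ν * (1 - z) * (a * (1 - z) + a * z * (-1))) z :=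
    (hl.mul hb).sub_const 1
  have hQne : ν * (1 + a * z * (1 - z)) - 1 ≠ 0 := ne_of_gt hQ
  have hD : HasDerivAt Ψ
      (((ν * (-1) * (1 + a * z * (1 - z)) + ν * (1 - z) * (a * (1 - z) + a * z * (-1))) *
          (ν * (1 + a * z * (1 - z)) - 1) -
        (ν * (1 - z) * (1 + a * z * (1 - z)) - 1) * (ν * (a * (1 - z) + a * z * (-1)))) /
        (ν * (1 + a * z * (1 - z)) - 1) ^ 2) z := by
    rw [hΨ]; exact hPd.div hQd hQne
  rw [hD.deriv]
  set Q : ℝ := ν * (1 + a * z * (1 - z)) - 1 with hQdef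
  set Num : ℝ := (ν * (-1) * (1 + a * z * (1 - z)) + ν * (1 - z) * (a * (1 - z) + a * z * (-1))) * Q -
      (ν * (1 - z) * (1 + a * z * (1 - z)) - 1) * (ν * (a * (1 - z) + a * z * (-1))) with hNumdef
  have hNum : Num = -(ν * (ν - 1)) * (1 + a * z * (1 - z)) ^ 2 -
      ν * (a * z ^ 2 + a ^ 2 * z ^ 2 * (1 - z) ^ 2) := by
    rw [hNumdef, hQdef]; ring
  have hM : 0 < ν * (1 + a / 4) - 1 := by nlinarith
  have h4 : a * z * (1 - z) ≤ a / 4 := by nlinarith [sq_nonneg (z - 1/2)]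
  have hQM : Q ≤ ν * (1 + a / 4) - 1 := by
    have := mul_le_mul_of_nonneg_left h4 (by linarith : (0:ℝ) ≤ ν)
    rw [hQdef]; nlinarith
  have hNle : Num ≤ -(ν * (ν - 1)) := by
    rw [hNum]
    have hh1 : (1:ℝ) ≤ 1 + a * z * (1 - z) := by
      nlinarith [mul_nonneg (mul_nonneg ha0.le hz0) (by linarith : (0:ℝ) ≤ 1 - z)]
    have hc : (0:ℝ) ≤ ν * (ν - 1) := mul_nonneg (by linarith) (by linarith)
    have hsq : (1:ℝ) ≤ (1 + a * z * (1 - z)) ^ 2 := by nlinarith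
    have e1 : ν * (ν - 1) ≤ ν * (ν - 1) * (1 + a * z * (1 - z)) ^ 2 := by
      nlinarith [mul_le_mul_of_nonneg_left hsq hc]
    have e2 : (0:ℝ) ≤ ν * (a * z ^ 2 + a ^ 2 * z ^ 2 * (1 - z) ^ 2) :=
      mul_nonneg (by linarith) (by positivity)
    linarith
  rw [div_le_div_iff₀ (by positivity) (by positivity)]
  have hc : (0:ℝ) ≤ ν * (ν - 1) := mul_nonneg (by linarith) (by linarith)
  have hQ2 : Q ^ 2 ≤ (ν * (1 + a / 4) - 1) ^ 2 := by nlinarith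
  have step1 : Num * (ν * (1 + a / 4) - 1) ^ 2 ≤ -(ν * (ν - 1)) * (ν * (1 + a / 4) - 1) ^ 2 :=
    mul_le_mul_of_nonneg_right hNle (sq_nonneg _)
  have step2 : ν * (ν - 1) * Q ^ 2 ≤ ν * (ν - 1) * (ν * (1 + a / 4) - 1) ^ 2 :=
    mul_le_mul_of_nonneg_left hQ2 hc
  linarith

theorem stmt_10 (a ν : ℝ) (ha : 1 ≤ a) (hν : 1 ≤ ν)
    (h Ψ : ℝ → ℝ) (hh : ∀ z : ℝ, h z = 1 + a * z * (1 - z))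
    (hΨ : ∀ z : ℝ, Ψ z = (ν * (1 - z) * h z - 1) / (ν * h z - 1)) :
    (∀ z ∈ Icc (0 : ℝ) 1,
      deriv Ψ z ≤ -(ν * (ν - 1)) / (ν * (1 + a / 4) - 1) ^ 2) ∧
    (1 < ν → StrictAntiOn Ψ (Icc (0 : ℝ) 1)) := by
  have ha0 : (0:ℝ) < a := by linarith
  have hΨ' : Ψ = fun z => (ν * (1 - z) * (1 + a * z * (1 - z)) - 1) /
      (ν * (1 + a * z * (1 - z)) - 1) := by
    funext z; rw [hΨ z, hh z]
  have part1 : ∀ z ∈ Icc (0 : ℝ) 1,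
      deriv Ψ z ≤ -(ν * (ν - 1)) / (ν * (1 + a / 4) - 1) ^ 2 := by
    intro z hz
    obtain ⟨hz0, hz1⟩ := hz
    rcases lt_or_eq_of_le hν with hν1 | hν1
    · refine key_deriv a ν ha hν Ψ hΨ' z hz0 hz1 ?_
      have : 0 ≤ a * z * (1 - z) :=
        mul_nonneg (mul_nonneg ha0.le hz0) (by linarith)
      nlinarith
    · -- ν = 1
      subst hν1
      have hRHS : -((1:ℝ) * (1 - 1)) / (1 * (1 + a / 4) - 1) ^ 2 = 0 := by norm_num
      rw [hRHS]
      have hg : ∀ w : ℝ, w ≠ 0 → Ψ w = (a * (1 - w) ^ 2 - 1) / (a * (1 - w)) := by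
        intro w hw
        have e1 : (1:ℝ) * (1 - w) * (1 + a * w * (1 - w)) - 1 = w * (a * (1 - w) ^ 2 - 1) := by
          ring
        have e2 : (1:ℝ) * (1 + a * w * (1 - w)) - 1 = w * (a * (1 - w)) := by ring
        rw [hΨ']
        simp only
        rw [e1, e2, mul_div_mul_left _ _ hw]
      rcases eq_or_lt_of_le hz0 with h0 | h0
      · -- z = 0
        subst h0
        rcases eq_or_lt_of_le ha with ha1 | ha1
        · -- a = 1 : Ψ is differentiable at 0 with derivative -2
          subst ha1
          have hΨg : Ψ = fun w => ((1 - w) ^ 2 - 1) / (1 - w) := by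
            funext w
            by_cases hw : w = 0
            · subst hw; rw [hΨ']; norm_num
            · rw [hg w hw]; norm_num
          rw [hΨg]
          have hA : HasDerivAt (fun w : ℝ => (1 - w) ^ 2 - 1)
              ((2 : ℕ) * (1 - (0:ℝ)) ^ (2 - 1) * (-1)) 0 := by
            have h2 : HasDerivAt (fun w : ℝ => 1 - w) (-1) 0 := by
              exact (hasDerivAt_id' (0:ℝ)).const_sub (1:ℝ)
            exact (h2.pow 2).sub_const 1
          have h2 : HasDerivAt (fun w : ℝ => 1 - w) (-1) 0 := by
            exact (hasDerivAt_id' (0:ℝ)).const_sub (1:ℝ)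
          have hdiv := hA.div h2 (by norm_num : (1:ℝ) - 0 ≠ 0)
          rw [show (fun w : ℝ => ((1 - w) ^ 2 - 1) / (1 - w)) = (fun w : ℝ => (1 - w) ^ 2 - 1) / (fun w : ℝ => 1 - w) from rfl, hdiv.deriv]
          norm_num
        · -- a > 1 : Ψ is discontinuous at 0
          have hΨ0 : Ψ 0 = 0 := by rw [hΨ']; norm_num
          have hnc : ¬ ContinuousAt Ψ 0 := by
            intro hc
            have h1 : Tendsto Ψ (𝓝[≠] (0:ℝ)) (𝓝 0) := by
              have := Tendsto.mono_left hc.tendsto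
                (nhdsWithin_le_nhds : 𝓝[≠] (0:ℝ) ≤ 𝓝 0)
              rwa [hΨ0] at this
            have h2 : ContinuousAt (fun w : ℝ => (a * (1 - w) ^ 2 - 1) / (a * (1 - w))) 0 := by
              apply ContinuousAt.div
              · fun_prop
              · fun_prop
              · simp; positivity
            have h3 : Tendsto Ψ (𝓝[≠] (0:ℝ))
                (𝓝 ((a * (1 - 0) ^ 2 - 1) / (a * (1 - 0)))) := by
              refine (h2.tendsto.mono_left nhdsWithin_le_nhds).congr' ?_
              filter_upwards [self_mem_nhdsWithin] with w hw
              exact (hg w hw).symm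
            have := tendsto_nhds_unique h1 h3
            rw [eq_comm, div_eq_iff (by positivity)] at this
            nlinarith
          rw [deriv_zero_of_not_differentiableAt (fun hd => hnc hd.continuousAt)]
      · rcases eq_or_lt_of_le hz1 with h1 | h1
        · -- z = 1 : Ψ is discontinuous at 1
          subst h1
          have hΨ1 : Ψ 1 = 0 := by rw [hΨ']; norm_num
          have hnc : ¬ ContinuousAt Ψ 1 := by
            intro hc
            have ht1 : Tendsto Ψ (𝓝[<] (1:ℝ)) (𝓝 0) := by
              have := Tendsto.mono_left hc.tendsto
                (nhdsWithin_le_nhds : 𝓝[<] (1:ℝ) ≤ 𝓝 1)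
              rwa [hΨ1] at this
            have hB : Tendsto (fun w : ℝ => a * (1 - w)) (𝓝[<] (1:ℝ)) (𝓝[>] 0) := by
              apply tendsto_nhdsWithin_of_tendsto_nhds_of_eventually_within
              · have : Tendsto (fun w : ℝ => a * (1 - w)) (𝓝 1) (𝓝 (a * (1 - 1))) :=
                  (continuous_const.mul (continuous_const.sub continuous_id)).tendsto 1
                simpa using this.mono_left nhdsWithin_le_nhds
              · filter_upwards [self_mem_nhdsWithin] with w hw
                have : w < 1 := hw
                have : 0 < a * (1 - w) := by nlinarith
                exact this
            have hBi : Tendsto (fun w : ℝ => (a * (1 - w))⁻¹) (𝓝[<] (1:ℝ)) atTop :=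
              tendsto_inv_nhdsGT_zero.comp hB
            have hA : Tendsto (fun w : ℝ => a * (1 - w) ^ 2 - 1) (𝓝[<] (1:ℝ))
                (𝓝 (a * (1 - 1) ^ 2 - 1)) := by
              have : Tendsto (fun w : ℝ => a * (1 - w) ^ 2 - 1) (𝓝 1)
                  (𝓝 (a * (1 - 1) ^ 2 - 1)) :=
                (((continuous_const.mul ((continuous_const.sub continuous_id).pow 2)).sub
                  continuous_const)).tendsto 1
              exact this.mono_left nhdsWithin_le_nhds
            have hbot : Tendsto Ψ (𝓝[<] (1:ℝ)) atBot := by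
              have hmul := Filter.Tendsto.neg_mul_atTop
                (show a * ((1:ℝ) - 1) ^ 2 - 1 < 0 by norm_num) hA hBi
              refine hmul.congr' ?_
              have hne : ∀ᶠ w in 𝓝[<] (1:ℝ), w ≠ 0 := by
                filter_upwards [Ioo_mem_nhdsLT_of_mem (by norm_num : (1:ℝ) ∈ Ioc (1/2) 1)]
                  with w hw
                exact ne_of_gt (by linarith [hw.1])
              filter_upwards [hne] with w hw
              rw [hg w hw, div_eq_mul_inv]
            exact hbot.not_tendsto (disjoint_nhds_atBot 0).symm ht1
          rw [deriv_zero_of_not_differentiableAt (fun hd => hnc hd.continuousAt)]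
        · -- 0 < z < 1 : interior point
          have hQ : 0 < 1 * (1 + a * z * (1 - z)) - 1 := by
            have := mul_pos (mul_pos ha0 h0) (by linarith : (0:ℝ) < 1 - z)
            linarith
          have := key_deriv a 1 ha le_rfl Ψ hΨ' z hz0 hz1 hQ
          simpa using this
  refine ⟨part1, ?_⟩
  intro hν1
  have hM : 0 < ν * (1 + a / 4) - 1 := by nlinarith
  apply strictAntiOn_of_deriv_neg (convex_Icc 0 1)
  · rw [hΨ']
    apply ContinuousOn.div
    · fun_prop
    · fun_prop
    · intro z hz
      have h0 : 0 ≤ a * z * (1 - z) :=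
        mul_nonneg (mul_nonneg ha0.le hz.1) (by linarith [hz.2])
      nlinarith
  · intro z hz
    rw [interior_Icc] at hz
    have hle := part1 z ⟨hz.1.le, hz.2.le⟩
    have : -(ν * (ν - 1)) / (ν * (1 + a / 4) - 1) ^ 2 < 0 := by
      apply div_neg_of_neg_of_pos
      · nlinarith
      · positivity
    linarith
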